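/- arXiv:2306.15021 — 3 statements merged into one kernel-verified Lean document; each statement's English description precedes it below -/
import Mathlib

section
/- Let H be a complex Hilbert space and let R = (R_1,…,R_d) be a commuting d-tuple of bounded linear operators on H. If R is (m,n)-isosymmetric (Λ_{m,n}(R) = 0), then for all integers m′ ≥ m and n′ ≥ n, R is (m′,n′)-isosymmetric (Λ_{m′,n′}(R) = 0). -/
open Finset ContinuousLinearMap
open scoped InnerProductSpace

variable {H : Type*} [NormedAddCommGroup H] [InnerProductSpace ℂ H] [CompleteSpace H]

/-- `R^γ = R_1^{γ_1} ⋯ R_d^{γ_d}` for a multi-index `γ`. -/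
noncomputable def opPow {d : ℕ} (R : Fin d → H →L[ℂ] H) (γ : Fin d → ℕ) : H →L[ℂ] H :=
  (List.ofFn fun i => (R i) ^ (γ i)).prod

/-- `M_m(R) = Σ_{k=0}^{m} (−1)^{m−k} C(m,k) Σ_{|γ|=k} (k!/γ!) R*^γ R^γ`. -/
noncomputable def Mop {d : ℕ} (R : Fin d → H →L[ℂ] H) (m : ℕ) : H →L[ℂ] H :=
  ∑ k ∈ Finset.range (m + 1), ((-1 : ℂ) ^ (m - k) * (m.choose k : ℂ)) •
    ∑ γ ∈ Finset.Nat.antidiagonalTuple d k,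
      ((Nat.multinomial Finset.univ γ : ℕ) : ℂ) •
        (opPow (fun i => ContinuousLinearMap.adjoint (R i)) γ * opPow R γ)

/-- `S_n(R) = Σ_{k=0}^{n} (−1)^{n−k} C(n,k) (R_1*+⋯+R_d*)^k (R_1+⋯+R_d)^{n−k}`. -/
noncomputable def Sop {d : ℕ} (R : Fin d → H →L[ℂ] H) (n : ℕ) : H →L[ℂ] H :=
  ∑ k ∈ Finset.range (n + 1), ((-1 : ℂ) ^ (n - k) * (n.choose k : ℂ)) •
    ((∑ i, ContinuousLinearMap.adjoint (R i)) ^ k * (∑ i, R i) ^ (n - k))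

/-- `Λ_{m,n}(R) = Σ_{k=0}^{n} (−1)^{n−k} C(n,k) (R_1*+⋯+R_d*)^k M_m(R) (R_1+⋯+R_d)^{n−k}`. -/
noncomputable def Lam {d : ℕ} (R : Fin d → H →L[ℂ] H) (m n : ℕ) : H →L[ℂ] H :=
  ∑ k ∈ Finset.range (n + 1), ((-1 : ℂ) ^ (n - k) * (n.choose k : ℂ)) •
    ((∑ i, ContinuousLinearMap.adjoint (R i)) ^ k * Mop R m * (∑ i, R i) ^ (n - k))

/-! ### Auxiliary material -/

open scoped TensorProduct
open MulOpposite

/-- Alternating binomial sum recursion. -/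
lemma altsum_succ {M : Type*} [AddCommGroup M] [Module ℂ M] (F : ℕ → M) (m : ℕ) :
    ∑ k ∈ Finset.range (m + 2), ((-1 : ℂ) ^ (m + 1 - k) * ((m + 1).choose k : ℂ)) • F k
      = (∑ k ∈ Finset.range (m + 1), ((-1 : ℂ) ^ (m - k) * (m.choose k : ℂ)) • F (k + 1))
        - ∑ k ∈ Finset.range (m + 1), ((-1 : ℂ) ^ (m - k) * (m.choose k : ℂ)) • F k := by
  rw [Finset.sum_range_succ']
  have e1 : ∀ k ∈ Finset.range (m + 1),
      ((-1 : ℂ) ^ (m + 1 - (k + 1)) * ((m + 1).choose (k + 1) : ℂ)) • F (k + 1)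
      = ((-1 : ℂ) ^ (m - k) * (m.choose k : ℂ)) • F (k + 1)
        + ((-1 : ℂ) ^ (m - k) * (m.choose (k + 1) : ℂ)) • F (k + 1) := by
    intro k _
    rw [Nat.choose_succ_succ, Nat.succ_sub_succ_eq_sub, Nat.cast_add, mul_add, add_smul]
  rw [Finset.sum_congr rfl e1, Finset.sum_add_distrib]
  have e2 : (∑ k ∈ Finset.range (m + 1), ((-1 : ℂ) ^ (m - k) * (m.choose (k + 1) : ℂ)) • F (k + 1))
      + ((-1 : ℂ) ^ (m + 1 - 0) * ((m + 1).choose 0 : ℂ)) • F 0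
      = - ∑ k ∈ Finset.range (m + 1), ((-1 : ℂ) ^ (m - k) * (m.choose k : ℂ)) • F k := by
    rw [Finset.sum_range_succ, Nat.choose_succ_self,
      Finset.sum_range_succ' (fun k => ((-1 : ℂ) ^ (m - k) * (m.choose k : ℂ)) • F k) m,
      neg_add]
    have e3 : ∀ k ∈ Finset.range m,
        ((-1 : ℂ) ^ (m - k) * (m.choose (k + 1) : ℂ)) • F (k + 1)
        = - (((-1 : ℂ) ^ (m - (k + 1)) * (m.choose (k + 1) : ℂ)) • F (k + 1)) := by
      intro k hk
      rw [Finset.mem_range] at hk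
      have h1 : m - k = (m - (k + 1)) + 1 := by omega
      rw [h1, pow_succ]
      rw [← neg_smul]
      ring_nf
    rw [Finset.sum_congr rfl e3]
    simp [pow_succ, neg_smul]
  rw [add_assoc, e2]
  abel

lemma noncommProd_univ_ofFn {M : Type*} [Monoid M] {d : ℕ} (f : Fin d → M)
    (hc : ((Finset.univ : Finset (Fin d)) : Set (Fin d)).Pairwise (Function.onFun Commute f)) :
    Finset.univ.noncommProd f hc = (List.ofFn f).prod := by
  rw [List.ofFn_eq_map, ← Finset.noncommProd_toFinset _ _ _ (List.nodup_finRange d)]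
  exact Finset.noncommProd_congr (by simp) (fun _ _ => rfl) _

lemma list_prod_op_comm {M : Type*} [Monoid M] {ι : Type*} (y : ι → M)
    (h : ∀ i j, Commute (y i) (y j)) (l : List ι) :
    (l.map fun i => op (y i)).prod = op (l.map y).prod := by
  induction l with
  | nil => simp
  | cons a l ih =>
      rw [List.map_cons, List.prod_cons, ih, List.map_cons, List.prod_cons, ← op_mul]
      congr 1
      exact ((Commute.list_prod_right _ _ (fun x hx => by
        obtain ⟨j, _, rfl⟩ := List.mem_map.mp hx; exact h a j)).symm.eq)

lemma list_prod_tmul {A B : Type*} [Ring A] [Algebra ℂ A] [Ring B] [Algebra ℂ B]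
    {ι : Type*} (x : ι → A) (y : ι → B) (l : List ι) :
    (l.map fun i => x i ⊗ₜ[ℂ] y i).prod = (l.map x).prod ⊗ₜ[ℂ] (l.map y).prod := by
  induction l with
  | nil => simp [Algebra.TensorProduct.one_def]
  | cons a l ih => simp [ih, Algebra.TensorProduct.tmul_mul_tmul]

/-- Exchanging a sum through a "sandwich". -/
lemma sum_sandwich {R' : Type*} [Ring R'] {ι : Type*} [Fintype ι]
    (A' B' : ι → R') (s : Finset ℕ) (G : ℕ → R') :
    ∑ k ∈ s, ∑ i, A' i * G k * B' i = ∑ i, A' i * (∑ k ∈ s, G k) * B' i := by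
  rw [Finset.sum_comm]
  exact Finset.sum_congr rfl fun i _ => by
    rw [Finset.mul_sum, Finset.sum_mul]

section Ops

variable {d : ℕ}

/-- The tensor element `Σ_i R_i* ⊗ op R_i`. -/
noncomputable def tens (R : Fin d → H →L[ℂ] H) : (H →L[ℂ] H) ⊗[ℂ] (H →L[ℂ] H)ᵐᵒᵖ :=
  ∑ i, (ContinuousLinearMap.adjoint (R i)) ⊗ₜ[ℂ] (op (R i))

/-- Multiplication map `x ⊗ op y ↦ x * y`. -/
noncomputable def mu : (H →L[ℂ] H) ⊗[ℂ] (H →L[ℂ] H)ᵐᵒᵖ →ₗ[ℂ] (H →L[ℂ] H) :=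
  (LinearMap.mul' ℂ _).comp
    (TensorProduct.map LinearMap.id (opLinearEquiv ℂ).symm.toLinearMap)

lemma mu_tmul (x : H →L[ℂ] H) (w : (H →L[ℂ] H)ᵐᵒᵖ) : mu (x ⊗ₜ[ℂ] w) = x * w.unop := by
  simp [mu, LinearMap.mul'_apply]

lemma mu_tmul_mul (x z : H →L[ℂ] H) (t : (H →L[ℂ] H) ⊗[ℂ] (H →L[ℂ] H)ᵐᵒᵖ) :
    mu ((x ⊗ₜ[ℂ] op z) * t) = x * mu t * z := by
  induction t with
  | zero => simp
  | tmul u w =>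
      rw [Algebra.TensorProduct.tmul_mul_tmul, mu_tmul, mu_tmul]
      simp [mul_assoc]
  | add t₁ t₂ h₁ h₂ => simp [mul_add, map_add, h₁, h₂, add_mul]

variable (R : Fin d → H →L[ℂ] H)

/-- `Q_k(R) = Σ_{|γ|=k} (k!/γ!) R*^γ R^γ`. -/
noncomputable def Qop (k : ℕ) : H →L[ℂ] H :=
  ∑ γ ∈ Finset.Nat.antidiagonalTuple d k,
    ((Nat.multinomial Finset.univ γ : ℕ) : ℂ) •
      (opPow (fun i => ContinuousLinearMap.adjoint (R i)) γ * opPow R γ)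

lemma Mop_eq_Qop (m : ℕ) :
    Mop R m = ∑ k ∈ Finset.range (m + 1),
      ((-1 : ℂ) ^ (m - k) * (m.choose k : ℂ)) • Qop R k := rfl

variable (hcomm : ∀ i j, Commute (R i) (R j))
include hcomm

lemma adj_comm (i j : Fin d) : Commute (ContinuousLinearMap.adjoint (R i))
    (ContinuousLinearMap.adjoint (R j)) := by
  rw [← ContinuousLinearMap.star_eq_adjoint, ← ContinuousLinearMap.star_eq_adjoint]
  exact (hcomm i j).star_star

lemma tens_pair_comm (i j : Fin d) :
    Commute ((ContinuousLinearMap.adjoint (R i)) ⊗ₜ[ℂ] (op (R i)))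
      ((ContinuousLinearMap.adjoint (R j)) ⊗ₜ[ℂ] (op (R j))) := by
  unfold Commute SemiconjBy
  rw [Algebra.TensorProduct.tmul_mul_tmul, Algebra.TensorProduct.tmul_mul_tmul,
    (adj_comm R hcomm i j).eq, ((hcomm i j).op).eq]

lemma Qop_eq_mu (k : ℕ) : Qop R k = mu (tens R ^ k) := by
  unfold tens
  rw [Finset.sum_pow_eq_sum_piAntidiag_of_commute (Finset.univ : Finset (Fin d))
    (fun i => (ContinuousLinearMap.adjoint (R i)) ⊗ₜ[ℂ] (op (R i)))
    (fun i _ j _ _ => tens_pair_comm R hcomm i j) k,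
    Finset.piAntidiag_univ_fin_eq_antidiagonalTuple k d, map_sum, Qop]
  refine Finset.sum_congr rfl fun γ _ => ?_
  have hpow : ∀ i ∈ (Finset.univ : Finset (Fin d)),
      ((ContinuousLinearMap.adjoint (R i)) ⊗ₜ[ℂ] (op (R i))) ^ γ i
      = ((ContinuousLinearMap.adjoint (R i)) ^ γ i) ⊗ₜ[ℂ] (op ((R i) ^ γ i)) := by
    intro i _
    rw [Algebra.TensorProduct.tmul_pow, op_pow]
  rw [Finset.noncommProd_congr rfl hpow
    ((fun i _ j _ _ => (tens_pair_comm R hcomm i j).pow_pow _ _ :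
      ((Finset.univ : Finset (Fin d)) : Set (Fin d)).Pairwise (Function.onFun Commute
        fun i => ((ContinuousLinearMap.adjoint (R i)) ⊗ₜ[ℂ] (op (R i))) ^ γ i)))]
  erw [noncommProd_univ_ofFn]
  rw [List.ofFn_eq_map,
    list_prod_tmul (fun i => (ContinuousLinearMap.adjoint (R i)) ^ γ i)
      (fun i => op ((R i) ^ γ i)),
    list_prod_op_comm (fun i => (R i) ^ γ i) (fun i j => (hcomm i j).pow_pow _ _)]
  rw [← nsmul_eq_mul, map_nsmul, mu_tmul, unop_op, Nat.cast_smul_eq_nsmul]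
  simp only [opPow, List.ofFn_eq_map]

lemma Qop_succ (k : ℕ) :
    Qop R (k + 1) = ∑ i, ContinuousLinearMap.adjoint (R i) * Qop R k * R i := by
  have hs : tens R * tens R ^ k
      = ∑ i, ((ContinuousLinearMap.adjoint (R i)) ⊗ₜ[ℂ] (op (R i))) * tens R ^ k := by
    rw [tens, Finset.sum_mul]
  rw [Qop_eq_mu R hcomm, pow_succ', hs, map_sum]
  exact Finset.sum_congr rfl fun i _ => by rw [mu_tmul_mul, ← Qop_eq_mu R hcomm]

lemma Mop_succ (m : ℕ) :
    Mop R (m + 1) = (∑ i, ContinuousLinearMap.adjoint (R i) * Mop R m * R i) - Mop R m := by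
  have e : ∀ k ∈ Finset.range (m + 1),
      ((-1 : ℂ) ^ (m - k) * (m.choose k : ℂ)) • Qop R (k + 1)
      = ∑ i, ContinuousLinearMap.adjoint (R i) *
          (((-1 : ℂ) ^ (m - k) * (m.choose k : ℂ)) • Qop R k) * R i := by
    intro k _
    rw [Qop_succ R hcomm k, Finset.smul_sum]
    exact Finset.sum_congr rfl fun i _ => by rw [mul_smul_comm, smul_mul_assoc]
  rw [Mop_eq_Qop R (m + 1), show m + 1 + 1 = m + 2 from rfl, altsum_succ (Qop R) m,
    Finset.sum_congr rfl e, sum_sandwich, ← Mop_eq_Qop R m]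

lemma Lam_m_succ (m n : ℕ) :
    Lam R (m + 1) n = (∑ i, ContinuousLinearMap.adjoint (R i) * Lam R m n * R i) - Lam R m n := by
  have key : ∀ k i, (∑ j, ContinuousLinearMap.adjoint (R j)) ^ k *
      (ContinuousLinearMap.adjoint (R i) * Mop R m * R i) * (∑ j, R j) ^ (n - k)
      = ContinuousLinearMap.adjoint (R i) *
        ((∑ j, ContinuousLinearMap.adjoint (R j)) ^ k * Mop R m * (∑ j, R j) ^ (n - k)) * R i := by
    intro k i
    have h1 : Commute (ContinuousLinearMap.adjoint (R i))
        ((∑ j, ContinuousLinearMap.adjoint (R j)) ^ k) :=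
      (Commute.sum_right _ _ _ fun j _ => adj_comm R hcomm i j).pow_right k
    have h2 : Commute (R i) ((∑ j, R j) ^ (n - k)) :=
      (Commute.sum_right _ _ _ fun j _ => hcomm i j).pow_right (n - k)
    simp only [mul_assoc]
    rw [h2.eq, ← mul_assoc ((∑ j, ContinuousLinearMap.adjoint (R j)) ^ k)
      (ContinuousLinearMap.adjoint (R i)), ← h1.eq, mul_assoc]
  have e : ∀ k ∈ Finset.range (n + 1),
      ((-1 : ℂ) ^ (n - k) * (n.choose k : ℂ)) •
        ((∑ j, ContinuousLinearMap.adjoint (R j)) ^ k * Mop R (m + 1) * (∑ j, R j) ^ (n - k))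
      = (∑ i, ContinuousLinearMap.adjoint (R i) *
          (((-1 : ℂ) ^ (n - k) * (n.choose k : ℂ)) •
            ((∑ j, ContinuousLinearMap.adjoint (R j)) ^ k * Mop R m * (∑ j, R j) ^ (n - k))) * R i)
        - ((-1 : ℂ) ^ (n - k) * (n.choose k : ℂ)) •
            ((∑ j, ContinuousLinearMap.adjoint (R j)) ^ k * Mop R m * (∑ j, R j) ^ (n - k)) := by
    intro k _
    rw [Mop_succ R hcomm m, mul_sub, sub_mul, smul_sub]
    congr 1
    rw [Finset.mul_sum, Finset.sum_mul, Finset.smul_sum]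
    exact Finset.sum_congr rfl fun i _ => by rw [key k i, mul_smul_comm, smul_mul_assoc]
  calc Lam R (m + 1) n
      = ∑ k ∈ Finset.range (n + 1), ((-1 : ℂ) ^ (n - k) * (n.choose k : ℂ)) •
        ((∑ j, ContinuousLinearMap.adjoint (R j)) ^ k * Mop R (m + 1) * (∑ j, R j) ^ (n - k)) :=
      rfl
    _ = ∑ k ∈ Finset.range (n + 1), ((∑ i, ContinuousLinearMap.adjoint (R i) *
          (((-1 : ℂ) ^ (n - k) * (n.choose k : ℂ)) •
            ((∑ j, ContinuousLinearMap.adjoint (R j)) ^ k * Mop R m * (∑ j, R j) ^ (n - k))) * R i)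
        - ((-1 : ℂ) ^ (n - k) * (n.choose k : ℂ)) •
            ((∑ j, ContinuousLinearMap.adjoint (R j)) ^ k * Mop R m * (∑ j, R j) ^ (n - k))) :=
      Finset.sum_congr rfl e
    _ = (∑ i, ContinuousLinearMap.adjoint (R i) * Lam R m n * R i) - Lam R m n := by
      rw [Finset.sum_sub_distrib, sum_sandwich]
      rfl

lemma Lam_n_succ (m n : ℕ) :
    Lam R m (n + 1) = (∑ i, ContinuousLinearMap.adjoint (R i)) * Lam R m n
      - Lam R m n * (∑ i, R i) := by
  unfold Lam
  rw [show n + 1 + 1 = n + 2 from rfl,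
    altsum_succ (fun k => (∑ i, ContinuousLinearMap.adjoint (R i)) ^ k * Mop R m *
      (∑ i, R i) ^ (n + 1 - k)) n]
  congr 1
  · rw [Finset.mul_sum]
    refine Finset.sum_congr rfl fun k _ => ?_
    rw [show n + 1 - (k + 1) = n - k from by omega, pow_succ', mul_smul_comm]
    simp only [mul_assoc]
  · rw [Finset.sum_mul]
    refine Finset.sum_congr rfl fun k hk => ?_
    rw [Finset.mem_range] at hk
    rw [show n + 1 - k = (n - k) + 1 from by omega, pow_succ, smul_mul_assoc]
    simp only [mul_assoc]

end Ops

/-- an `(m,n)`-isosymmetric multioperator is `(m′,n′)`-isosymmetric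
for all `m′ ≥ m`, `n′ ≥ n`. -/
theorem isosymmetric_mono {d : ℕ} (R : Fin d → H →L[ℂ] H)
    (hcomm : ∀ i j, Commute (R i) (R j)) (m n : ℕ) (h : Lam R m n = 0) :
    ∀ m' n' : ℕ, m ≤ m' → n ≤ n' → Lam R m' n' = 0 := by
  intro m' n' hm hn
  have key1 : Lam R m' n = 0 := by
    induction m', hm using Nat.le_induction with
    | base => exact h
    | succ M hM ih => rw [Lam_m_succ R hcomm M n, ih]; simp
  induction n', hn using Nat.le_induction with
  | base => exact key1
  | succ N hN ih => rw [Lam_n_succ R hcomm m' N, ih]; simp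
end

section
/- Let H be a complex Hilbert space and let R = (R_1,…,R_d) be a commuting d-tuple of bounded linear operators on H, and let m ≥ 2, n ≥ 2 be integers such that Λ_{m−1,n−1}(R) ≠ 0. If R is an n-symmetric multioperator (S_n(R) = 0), then the operators Λ_{m−1,0}(R), Λ_{m−1,1}(R), …, Λ_{m−1,n−1}(R) are linearly independent: whenever a_0,…,a_{n−1} ∈ ℂ satisfy Σ_{l=0}^{n−1} a_l Λ_{m−1,l}(R) = 0, then a_0 = a_1 = ⋯ = a_{n−1} = 0. -/
open Finset ContinuousLinearMap
open scoped InnerProductSpace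

variable {H : Type*} [NormedAddCommGroup H] [InnerProductSpace ℂ H] [CompleteSpace H]

/-! ### Auxiliary machinery -/

/-- The sum of the operators. -/
noncomputable def opB {d : ℕ} (R : Fin d → H →L[ℂ] H) : H →L[ℂ] H := ∑ i, R i

/-- The sum of the adjoints. -/
noncomputable def opA {d : ℕ} (R : Fin d → H →L[ℂ] H) : H →L[ℂ] H :=
  ∑ i, ContinuousLinearMap.adjoint (R i)

/-- The "conjugation-type" linear map `X ↦ Σ_k (−1)^{n−k} C(n,k) A^k X B^{n−k}`. -/
noncomputable def Phi (A B : H →L[ℂ] H) (n : ℕ) : (H →L[ℂ] H) →ₗ[ℂ] (H →L[ℂ] H) :=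
  ∑ k ∈ Finset.range (n + 1), ((-1 : ℂ) ^ (n - k) * (n.choose k : ℂ)) •
    ((LinearMap.mulLeft ℂ (A ^ k)).comp (LinearMap.mulRight ℂ (B ^ (n - k))))

lemma Phi_apply (A B : H →L[ℂ] H) (n : ℕ) (X : H →L[ℂ] H) :
    Phi A B n X = ∑ k ∈ Finset.range (n + 1), ((-1 : ℂ) ^ (n - k) * (n.choose k : ℂ)) •
      (A ^ k * X * B ^ (n - k)) := by
  simp [Phi, LinearMap.sum_apply, LinearMap.mulLeft_apply, LinearMap.mulRight_apply, mul_assoc]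

lemma lam_eq_Phi {d : ℕ} (R : Fin d → H →L[ℂ] H) (m n : ℕ) :
    Lam R m n = Phi (opA R) (opB R) n (Mop R m) := by
  rw [Phi_apply]; rfl

lemma sop_eq_Phi {d : ℕ} (R : Fin d → H →L[ℂ] H) (n : ℕ) :
    Sop R n = Phi (opA R) (opB R) n 1 := by
  rw [Phi_apply]
  simp only [mul_one]
  rfl

lemma Phi_conj (A B Pa P : H →L[ℂ] H) (h1 : Commute Pa A) (h2 : Commute P B) (n : ℕ)
    (X : H →L[ℂ] H) : Phi A B n (Pa * X * P) = Pa * Phi A B n X * P := by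
  rw [Phi_apply, Phi_apply, Finset.mul_sum, Finset.sum_mul]
  refine Finset.sum_congr rfl fun k _ => ?_
  rw [mul_smul_comm, smul_mul_assoc]
  congr 1
  simp only [mul_assoc]
  rw [(h2.pow_right (n - k)).eq, ← mul_assoc (A ^ k), (h1.pow_right k).symm.eq, mul_assoc]

lemma commute_sum_opPow {d : ℕ} (T : Fin d → H →L[ℂ] H) (hT : ∀ i j, Commute (T i) (T j))
    (γ : Fin d → ℕ) : Commute (∑ i, T i) (opPow T γ) := by
  refine Commute.sum_left _ _ _ fun i _ => ?_
  refine Commute.list_prod_right _ _ fun y hy => ?_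
  obtain ⟨j, rfl⟩ := List.mem_ofFn.mp hy
  exact (hT i j).pow_right _

lemma adjoint_commute {d : ℕ} (R : Fin d → H →L[ℂ] H) (hcomm : ∀ i j, Commute (R i) (R j))
    (i j : Fin d) :
    Commute (ContinuousLinearMap.adjoint (R i)) (ContinuousLinearMap.adjoint (R j)) := by
  have h := congrArg ContinuousLinearMap.adjoint (hcomm i j).eq
  simpa [Commute, SemiconjBy, ContinuousLinearMap.mul_def, ContinuousLinearMap.adjoint_comp]
    using h.symm

/-- If `S_n(R) = 0` then `Λ_{m,n}(R) = 0`. -/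
lemma lam_eq_zero {d : ℕ} (R : Fin d → H →L[ℂ] H) (hcomm : ∀ i j, Commute (R i) (R j))
    (m n : ℕ) (hs : Sop R n = 0) : Lam R m n = 0 := by
  rw [lam_eq_Phi, Mop, map_sum]
  refine Finset.sum_eq_zero fun k _ => ?_
  rw [map_smul, map_sum]
  have hz : ∀ γ ∈ Finset.Nat.antidiagonalTuple d k,
      Phi (opA R) (opB R) n
        (((Nat.multinomial Finset.univ γ : ℕ) : ℂ) •
          (opPow (fun i => ContinuousLinearMap.adjoint (R i)) γ * opPow R γ)) = 0 := by
    intro γ _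
    rw [map_smul]
    have h1 : Commute (opPow (fun i => ContinuousLinearMap.adjoint (R i)) γ) (opA R) :=
      (commute_sum_opPow _ (adjoint_commute R hcomm) γ).symm
    have h2 : Commute (opPow R γ) (opB R) := (commute_sum_opPow R hcomm γ).symm
    have : Phi (opA R) (opB R) n
        (opPow (fun i => ContinuousLinearMap.adjoint (R i)) γ * opPow R γ) = 0 := by
      calc Phi (opA R) (opB R) n
            (opPow (fun i => ContinuousLinearMap.adjoint (R i)) γ * opPow R γ)
          = Phi (opA R) (opB R) n
            (opPow (fun i => ContinuousLinearMap.adjoint (R i)) γ * 1 * opPow R γ) := by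
              rw [mul_one]
        _ = opPow (fun i => ContinuousLinearMap.adjoint (R i)) γ *
            Phi (opA R) (opB R) n 1 * opPow R γ := Phi_conj _ _ _ _ h1 h2 n 1
        _ = 0 := by rw [← sop_eq_Phi, hs, mul_zero, zero_mul]
    rw [this, smul_zero]
  rw [Finset.sum_eq_zero hz, smul_zero]

/-- `Λ_{m,n}` as the `n`-th power of the difference operator applied to `M_m`. -/
lemma lam_eq_pow {d : ℕ} (R : Fin d → H →L[ℂ] H) (m n : ℕ) :
    Lam R m n =
      ((LinearMap.mulLeft ℂ (opA R) - LinearMap.mulRight ℂ (opB R)) ^ n) (Mop R m) := by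
  have hxy : Commute (LinearMap.mulLeft ℂ (opA R)) (-(LinearMap.mulRight ℂ (opB R))) :=
    (LinearMap.commute_mulLeft_right (R := ℂ) (opA R) (opB R)).neg_right
  rw [sub_eq_add_neg, hxy.add_pow, LinearMap.sum_apply]
  have hLam : Lam R m n = ∑ k ∈ Finset.range (n + 1),
      ((-1 : ℂ) ^ (n - k) * (n.choose k : ℂ)) • (opA R ^ k * Mop R m * opB R ^ (n - k)) := rfl
  rw [hLam]
  refine Finset.sum_congr rfl fun k _ => ?_
  have h1 : LinearMap.mulLeft ℂ (opA R) ^ k = LinearMap.mulLeft ℂ (opA R ^ k) := by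
    simp
  have h2 : (-(LinearMap.mulRight ℂ (opB R))) ^ (n - k) =
      ((-1 : ℂ) ^ (n - k)) • LinearMap.mulRight ℂ (opB R ^ (n - k)) := by
    rw [show -(LinearMap.mulRight ℂ (opB R)) = (-1 : ℂ) • LinearMap.mulRight ℂ (opB R) from
      (neg_one_smul ℂ _).symm, smul_pow]
    simp
  rw [h1, h2]
  simp only [Module.End.mul_apply, LinearMap.smul_apply, LinearMap.mulLeft_apply,
    LinearMap.mulRight_apply, Module.End.natCast_apply, Module.End.mul_eq_comp,
    LinearMap.comp_apply]
  simp only [← Nat.cast_smul_eq_nsmul ℂ, mul_smul_comm, smul_mul_assoc, smul_smul]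
  rw [mul_assoc]

/-- Recurrence: `Λ_{m,l+1} = A Λ_{m,l} − Λ_{m,l} B`. -/
lemma lam_succ {d : ℕ} (R : Fin d → H →L[ℂ] H) (m l : ℕ) :
    Lam R m (l + 1) = opA R * Lam R m l - Lam R m l * opB R := by
  rw [lam_eq_pow R m (l + 1), lam_eq_pow R m l, pow_succ']
  simp [Module.End.mul_apply, LinearMap.sub_apply, LinearMap.mulLeft_apply,
    LinearMap.mulRight_apply]

/-- if `R` is a strict `n`-symmetric multioperator (with
`Λ_{m−1,n−1}(R) ≠ 0`), then `Λ_{m−1,0}(R), …, Λ_{m−1,n−1}(R)` are linearly independent. -/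
theorem lam_linear_independent_symmetric {d : ℕ} (R : Fin d → H →L[ℂ] H)
    (hcomm : ∀ i j, Commute (R i) (R j)) (m n : ℕ) (hm : 2 ≤ m) (hn : 2 ≤ n)
    (hne : Lam R (m - 1) (n - 1) ≠ 0) (hsym : Sop R n = 0)
    (a : ℕ → ℂ) (ha : ∑ l ∈ Finset.range n, a l • Lam R (m - 1) l = 0) :
    ∀ l < n, a l = 0 := by
  -- Λ vanishes from `n` onwards
  have hz0 : ∀ j, Lam R (m - 1) (n + j) = 0 := by
    intro j
    induction j with
    | zero => exact lam_eq_zero R hcomm (m - 1) n hsym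
    | succ j ih =>
        rw [← Nat.add_assoc, lam_succ, ih, mul_zero, zero_mul, sub_zero]
  have hzero : ∀ k, n ≤ k → Lam R (m - 1) k = 0 := by
    intro k hk
    obtain ⟨j, rfl⟩ := Nat.exists_eq_add_of_le hk
    exact hz0 j
  -- iterate the difference operator on the relation
  have hstep : ∀ j, ∑ l ∈ Finset.range n, a l • Lam R (m - 1) (l + j) = 0 := by
    intro j
    induction j with
    | zero => simpa using ha
    | succ j ih =>
        have : opA R * (∑ l ∈ Finset.range n, a l • Lam R (m - 1) (l + j)) -
            (∑ l ∈ Finset.range n, a l • Lam R (m - 1) (l + j)) * opB R = 0 := by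
          rw [ih, mul_zero, zero_mul, sub_zero]
        calc ∑ l ∈ Finset.range n, a l • Lam R (m - 1) (l + (j + 1))
            = ∑ l ∈ Finset.range n, a l •
                (opA R * Lam R (m - 1) (l + j) - Lam R (m - 1) (l + j) * opB R) := by
              refine Finset.sum_congr rfl fun l _ => ?_
              rw [← Nat.add_assoc, lam_succ]
          _ = opA R * (∑ l ∈ Finset.range n, a l • Lam R (m - 1) (l + j)) -
              (∑ l ∈ Finset.range n, a l • Lam R (m - 1) (l + j)) * opB R := by
              rw [Finset.mul_sum, Finset.sum_mul, ← Finset.sum_sub_distrib]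
              refine Finset.sum_congr rfl fun l _ => ?_
              rw [mul_smul_comm, smul_mul_assoc, smul_sub]
          _ = 0 := this
  -- downward extraction
  intro l hl
  induction l using Nat.strong_induction_on with
  | _ l ih =>
    have h := hstep (n - 1 - l)
    have hsingle : ∑ l' ∈ Finset.range n, a l' • Lam R (m - 1) (l' + (n - 1 - l)) =
        a l • Lam R (m - 1) (l + (n - 1 - l)) := by
      refine Finset.sum_eq_single l (fun l' hl' hne' => ?_) (fun h' => absurd (Finset.mem_range.mpr hl) h')
      rcases lt_or_gt_of_ne hne' with hlt | hgt
      · rw [ih l' hlt (lt_trans hlt hl), zero_smul]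
      · rw [hzero (l' + (n - 1 - l)) (by omega), smul_zero]
    rw [hsingle, show l + (n - 1 - l) = n - 1 by omega] at h
    rcases smul_eq_zero.mp h with h' | h'
    · exact h'
    · exact absurd h' hne
end

section
/- Let H be a complex Hilbert space and let R = (R_1,…,R_d) be a commuting d-tuple of bounded linear operators on H that is (m,n)-isosymmetric (Λ_{m,n}(R) = 0), with m, n positive integers. If μ = (μ_1,…,μ_d) ∈ ℂ^d lies in the joint approximate point spectrum of R, i.e. there exists a sequence (u_k) of unit vectors in H with ‖(R_l − μ_l)u_k‖ → 0 for every l = 1,…,d, then either Σ_{l=1}^{d} |μ_l|² = 1 or μ_1 + ⋯ + μ_d is real (its imaginary part is zero). -/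
open Finset ContinuousLinearMap
open scoped InnerProductSpace

variable {H : Type*} [NormedAddCommGroup H] [InnerProductSpace ℂ H] [CompleteSpace H]

open Filter

def Ap (u : ℕ → H) (T : H →L[ℂ] H) (c : ℂ) : Prop :=
  Tendsto (fun k => T (u k) - c • u k) atTop (nhds 0)

lemma ap_one (u : ℕ → H) : Ap u 1 1 := by
  simpa [Ap] using tendsto_const_nhds

lemma ap_mul {u : ℕ → H} {T T' : H →L[ℂ] H} {c c' : ℂ}
    (h : Ap u T c) (h' : Ap u T' c') : Ap u (T * T') (c * c') := by
  have key : ∀ k, T (T' (u k) - c' • u k) + c' • (T (u k) - c • u k)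
      = (T * T') (u k) - (c * c') • u k := by
    intro k
    simp only [ContinuousLinearMap.mul_apply, map_sub, map_smul, smul_sub, smul_smul]
    rw [mul_comm c' c]
    abel
  have h1 : Tendsto (⇑T ∘ fun k => T' (u k) - c' • u k) atTop (nhds 0) := by
    simpa using (T.continuous.tendsto 0).comp h'
  have h2 : Tendsto (fun k => c' • (T (u k) - c • u k)) atTop (nhds 0) := by
    simpa using h.const_smul c'
  have := h1.add h2
  rw [add_zero] at this
  exact this.congr key

lemma ap_pow {u : ℕ → H} {T : H →L[ℂ] H} {c : ℂ} (h : Ap u T c) (j : ℕ) :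
    Ap u (T ^ j) (c ^ j) := by
  induction j with
  | zero => simpa [pow_zero] using ap_one u
  | succ j ih => rw [pow_succ, pow_succ]; exact ap_mul ih h

lemma ap_sum {u : ℕ → H} {ι : Type*} (s : Finset ι) (T : ι → H →L[ℂ] H) (c : ι → ℂ)
    (h : ∀ i ∈ s, Ap u (T i) (c i)) : Ap u (∑ i ∈ s, T i) (∑ i ∈ s, c i) := by
  have key : ∀ k, (∑ i ∈ s, (T i (u k) - c i • u k))
      = (∑ i ∈ s, T i) (u k) - (∑ i ∈ s, c i) • u k := by
    intro k
    rw [ContinuousLinearMap.sum_apply, Finset.sum_sub_distrib, Finset.sum_smul]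
  have := tendsto_finset_sum s h
  rw [Finset.sum_const_zero] at this
  exact this.congr key

lemma opPow_succ {d : ℕ} (R : Fin (d+1) → H →L[ℂ] H) (γ : Fin (d+1) → ℕ) :
    opPow R γ = R 0 ^ γ 0 * opPow (fun i => R i.succ) (fun i => γ i.succ) := by
  simp [opPow, List.ofFn_succ]

lemma ap_opPow {u : ℕ → H} : ∀ {d : ℕ} {R : Fin d → H →L[ℂ] H} {μ : Fin d → ℂ},
    (∀ i, Ap u (R i) (μ i)) → ∀ γ : Fin d → ℕ, Ap u (opPow R γ) (∏ i, μ i ^ γ i)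
  | 0, R, μ, h, γ => by simpa [opPow] using ap_one u
  | (d+1), R, μ, h, γ => by
    rw [opPow_succ, Fin.prod_univ_succ]
    exact ap_mul (ap_pow (h 0) _) (ap_opPow (fun i => h i.succ) _)

lemma commute_opPow {T : H →L[ℂ] H} : ∀ {d : ℕ} {S : Fin d → H →L[ℂ] H},
    (∀ i, Commute T (S i)) → ∀ γ : Fin d → ℕ, Commute T (opPow S γ)
  | 0, S, h, γ => by simpa [opPow] using Commute.one_right T
  | (d+1), S, h, γ => by
    rw [opPow_succ]
    exact ((h 0).pow_right _).mul_right (commute_opPow (fun i => h i.succ) _)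

lemma adjoint_opPow : ∀ {d : ℕ} (R : Fin d → H →L[ℂ] H),
    (∀ i j, Commute (R i) (R j)) → ∀ γ : Fin d → ℕ,
    ContinuousLinearMap.adjoint (opPow R γ)
      = opPow (fun i => ContinuousLinearMap.adjoint (R i)) γ
  | 0, R, hcomm, γ => by simp [opPow, ← star_eq_adjoint]
  | (d+1), R, hcomm, γ => by
    rw [opPow_succ R γ, opPow_succ (fun i => ContinuousLinearMap.adjoint (R i))]
    rw [← star_eq_adjoint, star_mul, star_pow]
    simp only [star_eq_adjoint]
    rw [adjoint_opPow _ (fun i j => hcomm i.succ j.succ)]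
    have hc : Commute ((ContinuousLinearMap.adjoint (R 0)) ^ γ 0)
        (opPow (fun i => ContinuousLinearMap.adjoint (R i.succ)) (fun i => γ i.succ)) := by
      refine commute_opPow (fun i => ?_) _
      have := (hcomm 0 i.succ).star_star
      simpa [star_eq_adjoint] using Commute.pow_left this (γ 0)
    exact hc.eq.symm

lemma iq_conj_mul {u : ℕ → H} (hu : ∀ k, ‖u k‖ = 1) {S T B : H →L[ℂ] H} {c c' z : ℂ}
    (hS : Ap u S c) (hT : Ap u T c')
    (hB : Tendsto (fun k => (⟪u k, B (u k)⟫_ℂ)) atTop (nhds z)) :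
    Tendsto (fun k => (⟪S (u k), B (T (u k))⟫_ℂ)) atTop
      (nhds ((starRingEnd ℂ) c * c' * z)) := by
  have key : ∀ k, ((starRingEnd ℂ) c * c' * ⟪u k, B (u k)⟫_ℂ
        + (starRingEnd ℂ) c * ⟪u k, B (T (u k) - c' • u k)⟫_ℂ)
        + c' * ⟪S (u k) - c • u k, B (u k)⟫_ℂ
        + ⟪S (u k) - c • u k, B (T (u k) - c' • u k)⟫_ℂ
      = ⟪S (u k), B (T (u k))⟫_ℂ := by
    intro k
    simp only [map_sub, map_smul, inner_sub_left, inner_sub_right, inner_smul_left,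
      inner_smul_right]
    ring
  have hBf : Tendsto (⇑B ∘ fun k => T (u k) - c' • u k) atTop (nhds 0) := by
    simpa using (B.continuous.tendsto 0).comp hT
  have h2 : Tendsto (fun k => (⟪u k, B (T (u k) - c' • u k)⟫_ℂ)) atTop (nhds 0) := by
    refine squeeze_zero_norm (a := fun k => ‖B (T (u k) - c' • u k)‖) ?_ ?_
    · intro k
      calc ‖(⟪u k, B (T (u k) - c' • u k)⟫_ℂ)‖
          ≤ ‖u k‖ * ‖B (T (u k) - c' • u k)‖ := norm_inner_le_norm _ _
        _ = ‖B (T (u k) - c' • u k)‖ := by rw [hu k, one_mul]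
    · exact tendsto_zero_iff_norm_tendsto_zero.1 hBf
  have h3 : Tendsto (fun k => (⟪S (u k) - c • u k, B (u k)⟫_ℂ)) atTop (nhds 0) := by
    refine squeeze_zero_norm (a := fun k => ‖S (u k) - c • u k‖ * ‖B‖) ?_ ?_
    · intro k
      calc ‖(⟪S (u k) - c • u k, B (u k)⟫_ℂ)‖
          ≤ ‖S (u k) - c • u k‖ * ‖B (u k)‖ := norm_inner_le_norm _ _
        _ ≤ ‖S (u k) - c • u k‖ * (‖B‖ * ‖u k‖) := by
            exact mul_le_mul_of_nonneg_left (B.le_opNorm (u k)) (norm_nonneg _)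
        _ = ‖S (u k) - c • u k‖ * ‖B‖ := by rw [hu k, mul_one]
    · simpa using (tendsto_zero_iff_norm_tendsto_zero.1 hS).mul_const ‖B‖
  have h4 : Tendsto (fun k => (⟪S (u k) - c • u k, B (T (u k) - c' • u k)⟫_ℂ)) atTop (nhds 0) := by
    refine squeeze_zero_norm (a := fun k => ‖S (u k) - c • u k‖ * ‖B (T (u k) - c' • u k)‖) ?_ ?_
    · intro k; exact norm_inner_le_norm _ _
    · simpa using (tendsto_zero_iff_norm_tendsto_zero.1 hS).mul
        (tendsto_zero_iff_norm_tendsto_zero.1 hBf)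
  have total := (((hB.const_mul ((starRingEnd ℂ) c * c')).add
      (h2.const_mul ((starRingEnd ℂ) c))).add (h3.const_mul c')).add h4
  simp only [mul_zero, add_zero] at total
  exact total.congr key

/-- if `R` is `(m,n)`-isosymmetric and `μ` lies in the joint approximate
point spectrum of `R`, then `Σ |μ_l|² = 1` or `μ_1+⋯+μ_d` is real. -/
theorem joint_approx_spectrum_alternative {d : ℕ} (R : Fin d → H →L[ℂ] H)
    (hcomm : ∀ i j, Commute (R i) (R j)) (m n : ℕ) (hm : 0 < m) (hn : 0 < n)
    (hiso : Lam R m n = 0) (μ : Fin d → ℂ)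
    (hmu : ∃ u : ℕ → H, (∀ k, ‖u k‖ = 1) ∧
      ∀ l, Filter.Tendsto (fun k => ‖R l (u k) - μ l • u k‖) Filter.atTop (nhds 0)) :
    (∑ l, ‖μ l‖ ^ 2) = 1 ∨ (∑ l, μ l).im = 0 := by
  classical
  obtain ⟨u, hu, hmu'⟩ := hmu
  have hap : ∀ l, Ap u (R l) (μ l) := fun l =>
    tendsto_zero_iff_norm_tendsto_zero.2 (hmu' l)
  set s : ℂ := ∑ l, μ l with hs
  set w : Fin d → ℂ := fun i => (starRingEnd ℂ) (μ i) * μ i with hw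
  set t : ℂ := ∑ i, w i with ht
  have hA : Ap u (∑ i, R i) s := ap_sum _ _ _ (fun i _ => hap i)
  have hAj : ∀ j, Ap u ((∑ i, R i) ^ j) (s ^ j) := fun j => ap_pow hA j
  have hIQ1 : Tendsto (fun k => (⟪u k, (1 : H →L[ℂ] H) (u k)⟫_ℂ)) atTop (nhds 1) := by
    have h1 : ∀ k, (⟪u k, (1 : H →L[ℂ] H) (u k)⟫_ℂ) = 1 := by
      intro k
      rw [ContinuousLinearMap.one_apply, inner_self_eq_norm_sq_to_K, hu k]
      norm_num
    exact tendsto_const_nhds.congr fun k => (h1 k).symm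
  have hadj : ∀ γ : Fin d → ℕ, opPow (fun i => ContinuousLinearMap.adjoint (R i)) γ
      = ContinuousLinearMap.adjoint (opPow R γ) := fun γ => (adjoint_opPow R hcomm γ).symm
  have hgam : ∀ γ : Fin d → ℕ, Tendsto
      (fun k => (⟪u k, (opPow (fun i => ContinuousLinearMap.adjoint (R i)) γ * opPow R γ) (u k)⟫_ℂ))
      atTop (nhds (∏ i, w i ^ γ i)) := by
    intro γ
    have key : ∀ k, (⟪u k,
        (opPow (fun i => ContinuousLinearMap.adjoint (R i)) γ * opPow R γ) (u k)⟫_ℂ)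
        = ⟪opPow R γ (u k), (1 : H →L[ℂ] H) (opPow R γ (u k))⟫_ℂ := by
      intro k
      rw [ContinuousLinearMap.mul_apply, hadj γ, ContinuousLinearMap.adjoint_inner_right,
        ContinuousLinearMap.one_apply]
    have lim := iq_conj_mul hu (ap_opPow hap γ) (ap_opPow hap γ) hIQ1
    have hval : (starRingEnd ℂ) (∏ i, μ i ^ γ i) * (∏ i, μ i ^ γ i) * 1
        = ∏ i, w i ^ γ i := by
      simp only [map_prod, map_pow, mul_one, ← Finset.prod_mul_distrib, ← mul_pow, hw]
    rw [hval] at lim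
    exact lim.congr fun k => (key k).symm
  have hkeyM : ∀ k, (⟪u k, Mop R m (u k)⟫_ℂ)
      = ∑ j ∈ Finset.range (m+1), ((-1:ℂ)^(m-j) * (m.choose j : ℂ)) *
          ∑ γ ∈ Finset.Nat.antidiagonalTuple d j,
            ((Nat.multinomial Finset.univ γ : ℕ) : ℂ) *
            ⟪u k, (opPow (fun i => ContinuousLinearMap.adjoint (R i)) γ * opPow R γ) (u k)⟫_ℂ := by
    intro k
    simp [Mop, ContinuousLinearMap.sum_apply, ContinuousLinearMap.smul_apply,
      inner_sum, inner_smul_right, Finset.mul_sum]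
  have hmn : ∀ j, (∑ γ ∈ Finset.Nat.antidiagonalTuple d j,
      ((Nat.multinomial Finset.univ γ : ℕ) : ℂ) * ∏ i, w i ^ γ i) = t ^ j := by
    intro j
    have h := Finset.sum_pow_eq_sum_piAntidiag (Finset.univ : Finset (Fin d)) w j
    rw [Finset.piAntidiag_univ_fin_eq_antidiagonalTuple] at h
    exact h.symm
  have hbinm : ∑ j ∈ Finset.range (m+1), ((-1:ℂ)^(m-j) * (m.choose j : ℂ)) * t^j
      = (t - 1)^m := by
    rw [sub_eq_add_neg, add_pow]
    exact Finset.sum_congr rfl fun j hj => by ring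
  have hIQM : Tendsto (fun k => (⟪u k, Mop R m (u k)⟫_ℂ)) atTop (nhds ((t - 1)^m)) := by
    have lim := tendsto_finset_sum (Finset.range (m+1)) (fun j _ =>
      Tendsto.const_mul ((-1:ℂ)^(m-j) * (m.choose j : ℂ))
        (tendsto_finset_sum (Finset.Nat.antidiagonalTuple d j) (fun γ _ =>
          Tendsto.const_mul ((Nat.multinomial Finset.univ γ : ℕ) : ℂ) (hgam γ))))
    have hval : (∑ j ∈ Finset.range (m+1), ((-1:ℂ)^(m-j) * (m.choose j : ℂ)) *
        ∑ γ ∈ Finset.Nat.antidiagonalTuple d j,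
          ((Nat.multinomial Finset.univ γ : ℕ) : ℂ) * ∏ i, w i ^ γ i) = (t-1)^m := by
      rw [← hbinm]
      exact Finset.sum_congr rfl fun j _ => by rw [hmn j]
    rw [hval] at lim
    exact lim.congr fun k => (hkeyM k).symm
  have hadjpow : ∀ j, ((∑ i, ContinuousLinearMap.adjoint (R i)) ^ j)
      = ContinuousLinearMap.adjoint ((∑ i, R i) ^ j) := by
    intro j
    simp only [← star_eq_adjoint, ← star_sum, ← star_pow]
  have hkeyL : ∀ k, (⟪u k, Lam R m n (u k)⟫_ℂ)
      = ∑ j ∈ Finset.range (n+1), ((-1:ℂ)^(n-j) * (n.choose j : ℂ)) *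
          ⟪((∑ i, R i)^j) (u k), Mop R m (((∑ i, R i)^(n-j)) (u k))⟫_ℂ := by
    intro k
    simp only [Lam, ContinuousLinearMap.sum_apply, inner_sum,
      ContinuousLinearMap.smul_apply, inner_smul_right, ContinuousLinearMap.mul_apply,
      hadjpow, ContinuousLinearMap.adjoint_inner_right]
  have hlimL := tendsto_finset_sum (Finset.range (n+1)) (fun j (_ : j ∈ Finset.range (n+1)) =>
    Tendsto.const_mul ((-1:ℂ)^(n-j) * (n.choose j : ℂ))
      (iq_conj_mul hu (hAj j) (hAj (n-j)) hIQM))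
  have hbinn : ∀ z : ℂ, ∑ j ∈ Finset.range (n+1), ((-1:ℂ)^(n-j) * (n.choose j : ℂ)) *
      ((starRingEnd ℂ) (s^j) * s^(n-j) * z)
      = ((starRingEnd ℂ) s - s)^n * z := by
    intro z
    rw [sub_eq_add_neg, add_pow, Finset.sum_mul]
    refine Finset.sum_congr rfl fun j hj => ?_
    rw [map_pow, neg_pow]
    ring
  rw [hbinn ((t-1)^m)] at hlimL
  have h0 : Tendsto (fun k => (⟪u k, Lam R m n (u k)⟫_ℂ)) atTop (nhds 0) := by
    have : ∀ k, (⟪u k, Lam R m n (u k)⟫_ℂ) = 0 := by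
      intro k; rw [hiso]; simp
    exact tendsto_const_nhds.congr fun k => (this k).symm
  have hfin := tendsto_nhds_unique h0 (hlimL.congr fun k => (hkeyL k).symm)
  rcases mul_eq_zero.mp hfin.symm with h | h
  · right
    have h1 : (starRingEnd ℂ) s - s = 0 := pow_eq_zero_iff hn.ne' |>.mp h
    have h2 : (starRingEnd ℂ) s = s := sub_eq_zero.mp h1
    have := Complex.conj_eq_iff_im.mp h2
    simpa [hs] using this
  · left
    have h1 : t = 1 := sub_eq_zero.mp (pow_eq_zero_iff hm.ne' |>.mp h)
    have hcast : ((∑ l, ‖μ l‖^2 : ℝ) : ℂ) = t := by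
      rw [ht]
      push_cast
      refine Finset.sum_congr rfl fun i _ => ?_
      rw [hw]
      exact (RCLike.conj_mul (μ i)).symm
    rw [h1] at hcast
    exact_mod_cast hcast
end
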